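/- Let $\mathcal{C} \subset \mathbb{R}^m$ be a nonempty compact convex set, $\tau > 0$, $\delta \in (0,1)$, and $I \in \mathbb{R}^m$ with $I_i > \max_{c \in \mathcal{C}} c_i$ for all $i$. Set $\Omega^m_\delta := \{\omega \in \mathbb{R}^m : \sum_i \omega_i = 1,\ \omega_i \geq \delta\}$. Suppose for each $\omega \in \Omega^m_\delta$ the function $\Phi(c,\omega) = \sum_{i=1}^m \exp(\omega_i(I_i - c_i)/\tau)$ has a unique minimizer $c^\omega$ over $\mathcal{C}$. Then $\omega \mapsto c^\omega$ is Lipschitz continuous on $\Omega^m_\delta$; explicitly, $\|c^{\omega} - c^{\omega'}\| \leq (U/\mu)\|\omega - \omega'\|$ where $\mu = (\delta/\tau)^2 e^{\delta \alpha_*/\tau}$ with $\alpha_* = \min_i (I_i - \max_{c \in \mathcal{C}} c_i)$, and $U = \max_i \frac{1}{\tau}(1 + \beta_i/\tau)e^{\beta_i/\tau}$ with $\beta_i = I_i - \min_{c \in \mathcal{C}} c_i$. -/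

import Mathlib

open Set Filter Topology

section AuxLemmas

open Set

lemma scalar_convex (b A S μ : ℝ) (hb : 0 < b) (hμ : μ ≤ b^2 * Real.exp (b * (A - S))) :
    ConvexOn ℝ (Set.Iic S) (fun x => Real.exp (b * (A - x)) - μ/2 * x^2) := by
  have hD : ∀ x : ℝ, HasDerivAt (fun x => Real.exp (b * (A - x)) - μ/2 * x^2)
      (-b * Real.exp (b * (A - x)) - μ * x) x := by
    intro x
    have h1 : HasDerivAt (fun x : ℝ => b * (A - x)) (-b) x := by
      simpa using ((hasDerivAt_id x).const_sub A).const_mul b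
    have h2 : HasDerivAt (fun x => Real.exp (b * (A - x)))
        (Real.exp (b * (A - x)) * (-b)) x := h1.exp
    have h3 : HasDerivAt (fun x : ℝ => μ/2 * x^2) (μ/2 * (2 * x^1)) x :=
      (hasDerivAt_pow 2 x).const_mul (μ/2)
    exact (h2.sub h3).congr_deriv (by ring)
  have hD2 : ∀ x : ℝ, HasDerivAt (fun x => -b * Real.exp (b * (A - x)) - μ * x)
      (b^2 * Real.exp (b * (A - x)) - μ) x := by
    intro x
    have h1 : HasDerivAt (fun x : ℝ => b * (A - x)) (-b) x := by
      simpa using ((hasDerivAt_id x).const_sub A).const_mul b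
    have h2 : HasDerivAt (fun x => -b * Real.exp (b * (A - x)))
        (-b * (Real.exp (b * (A - x)) * (-b))) x := (h1.exp).const_mul (-b)
    have h3 : HasDerivAt (fun x : ℝ => μ * x) μ x := by
      simpa using (hasDerivAt_id x).const_mul μ
    exact (h2.sub h3).congr_deriv (by ring)
  apply convexOn_of_hasDerivWithinAt2_nonneg (convex_Iic S)
    (f' := fun x => -b * Real.exp (b * (A - x)) - μ * x)
    (f'' := fun x => b^2 * Real.exp (b * (A - x)) - μ)
  · exact ((Real.continuous_exp.comp (by continuity)).sub (by continuity)).continuousOn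
  · intro x _; exact (hD x).hasDerivWithinAt
  · intro x _; exact (hD2 x).hasDerivWithinAt
  · intro x hx
    rw [interior_Iic] at hx
    have hx' : x < S := hx
    have : b * (A - S) ≤ b * (A - x) := by nlinarith
    have := Real.exp_le_exp.2 this
    nlinarith [Real.exp_pos (b * (A - S))]

open Set Filter Topology

lemma norm_combo_identity {E : Type*} [NormedAddCommGroup E] [InnerProductSpace ℝ E]
    (x c : E) (a b : ℝ) (hab : a + b = 1) :
    a * ‖x‖^2 + b * ‖c‖^2 - ‖a • x + b • c‖^2 = a * b * ‖x - c‖^2 := by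
  have h1 : ‖a • x + b • c‖^2 = a^2 * ‖x‖^2 + 2*(a*b)*(inner ℝ x c : ℝ) + b^2*‖c‖^2 := by
    rw [norm_add_sq_real, norm_smul, norm_smul, real_inner_smul_left, real_inner_smul_right]
    simp only [Real.norm_eq_abs, mul_pow, sq_abs]
    ring
  have h2 : ‖x - c‖^2 = ‖x‖^2 - 2*(inner ℝ x c : ℝ) + ‖c‖^2 := norm_sub_sq_real x c
  linear_combination (-1 : ℝ) * h1 - (a*b) * h2 - (a*‖x‖^2 + b*‖c‖^2) * hab

lemma growth_at_min {E : Type*} [NormedAddCommGroup E] [InnerProductSpace ℝ E]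
    {C : Set E} (hC : Convex ℝ C) {f : E → ℝ} {μ : ℝ}
    (hF : ConvexOn ℝ C (fun c => f c - μ/2 * ‖c‖^2))
    {x : E} (hx : x ∈ C) (hmin : ∀ c ∈ C, f x ≤ f c)
    {c : E} (hc : c ∈ C) : f x + μ/2 * ‖c - x‖^2 ≤ f c := by
  have key : ∀ t ∈ Set.Ioo (0:ℝ) 1, μ/2 * (1-t) * ‖c - x‖^2 ≤ f c - f x := by
    intro t ht
    obtain ⟨ht0, ht1⟩ := ht
    have ha : (0:ℝ) ≤ 1 - t := by linarith
    have hb : (0:ℝ) ≤ t := le_of_lt ht0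
    have hab : (1-t) + t = 1 := by ring
    have hz : (1-t) • x + t • c ∈ C := hC hx hc ha hb hab
    have h2 := hF.2 hx hc ha hb hab
    simp only [smul_eq_mul] at h2
    have h3 := hmin _ hz
    have h4 := norm_combo_identity x c (1-t) t hab
    have h5 : ‖x - c‖ = ‖c - x‖ := norm_sub_rev x c
    rw [h5] at h4
    have heq : (1-t)*(f x - μ/2*‖x‖^2) + t*(f c - μ/2*‖c‖^2) + μ/2*‖(1-t)•x+t•c‖^2
        = (1-t)*f x + t*f c - μ/2*((1-t)*t*‖c-x‖^2) := by
      linear_combination (-(μ/2)) * h4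
    have e1 : f x ≤ (1-t)*f x + t*f c - μ/2*((1-t)*t*‖c-x‖^2) := by linarith
    have e2 : (μ/2*(1-t)*‖c-x‖^2) * t ≤ (f c - f x) * t := by nlinarith [e1]
    exact le_of_mul_le_mul_right e2 ht0
  have hne : (𝓝[Set.Ioo (0:ℝ) 1] 0).NeBot := by
    apply mem_closure_iff_nhdsWithin_neBot.mp
    rw [closure_Ioo (by norm_num : (0:ℝ) ≠ 1)]
    exact ⟨le_refl 0, by norm_num⟩
  have hlim : Tendsto (fun t : ℝ => μ/2 * (1-t) * ‖c - x‖^2) (𝓝[Set.Ioo (0:ℝ) 1] 0)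
      (𝓝 (μ/2 * ‖c - x‖^2)) := by
    have hcont : Continuous (fun t : ℝ => μ/2 * (1-t) * ‖c - x‖^2) := by continuity
    have h : ContinuousWithinAt (fun t : ℝ => μ/2 * (1-t) * ‖c - x‖^2) (Set.Ioo (0:ℝ) 1) 0 :=
      hcont.continuousWithinAt
    simpa [ContinuousWithinAt] using h
  have := le_of_tendsto hlim (eventually_nhdsWithin_of_forall key)
  linarith

open Set

lemma coord_lip (τ : ℝ) (hτ : 0 < τ) (Ii lo hi : ℝ) (hhi : hi ≤ Ii)
    (w w' : ℝ) (hw : w ∈ Set.Icc (0:ℝ) 1) (hw' : w' ∈ Set.Icc (0:ℝ) 1)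
    {x y : ℝ} (hx : x ∈ Set.Icc lo hi) (hy : y ∈ Set.Icc lo hi) :
    |(Real.exp (w*(Ii - y)/τ) - Real.exp (w'*(Ii - y)/τ))
      - (Real.exp (w*(Ii - x)/τ) - Real.exp (w'*(Ii - x)/τ))|
      ≤ ((1/τ)*(1+(Ii - lo)/τ)*Real.exp ((Ii - lo)/τ)) * |w - w'| * |y - x| := by
  set β := Ii - lo with hβ
  set K := (1/τ)*(1+β/τ)*Real.exp (β/τ) with hK
  -- Step A : inner MVT in the weight variable
  have stepA : ∀ s ∈ Set.Icc lo hi,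
      |(w'/τ * Real.exp (w'*(Ii - s)/τ)) - (w/τ * Real.exp (w*(Ii - s)/τ))| ≤ K * |w' - w| := by
    intro s hs
    set a := Ii - s with ha
    have ha0 : 0 ≤ a := by simp only [ha]; linarith [hs.2]
    have haβ : a ≤ β := by simp only [ha, hβ]; linarith [hs.1]
    have hder : ∀ u ∈ Set.Icc (0:ℝ) 1, HasDerivWithinAt (fun u : ℝ => u/τ * Real.exp (u*a/τ))
        (1/τ * Real.exp (u*a/τ) + u/τ * (Real.exp (u*a/τ) * (a/τ))) (Set.Icc (0:ℝ) 1) u := by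
      intro u _
      have hu1 : HasDerivAt (fun u : ℝ => u/τ) (1/τ) u := by
        simpa using (hasDerivAt_id u).div_const τ
      have hu2 : HasDerivAt (fun u : ℝ => u*a/τ) (a/τ) u := by
        simpa using ((hasDerivAt_id u).mul_const a).div_const τ
      exact (hu1.mul hu2.exp).hasDerivWithinAt
    have hbound : ∀ u ∈ Set.Icc (0:ℝ) 1,
        ‖1/τ * Real.exp (u*a/τ) + u/τ * (Real.exp (u*a/τ) * (a/τ))‖ ≤ K := by
      intro u hu
      obtain ⟨hu0, hu1⟩ := hu
      have hua : u * a ≤ β := le_trans (by nlinarith) haβ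
      have hE : Real.exp (u*a/τ) ≤ Real.exp (β/τ) := by
        apply Real.exp_le_exp.2
        gcongr
      have hepos : (0:ℝ) < Real.exp (u*a/τ) := Real.exp_pos _
      have hval : (0:ℝ) ≤ 1/τ * Real.exp (u*a/τ) + u/τ * (Real.exp (u*a/τ) * (a/τ)) := by
        have : (0:ℝ) < 1/τ := by positivity
        have h2 : 0 ≤ u/τ * (Real.exp (u*a/τ) * (a/τ)) := by positivity
        nlinarith
      rw [Real.norm_eq_abs, abs_of_nonneg hval, hK]
      have h1 : 1/τ * Real.exp (u*a/τ) ≤ 1/τ * Real.exp (β/τ) := by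
        apply mul_le_mul_of_nonneg_left hE (by positivity)
      have h2 : u/τ * (Real.exp (u*a/τ) * (a/τ)) ≤ β/τ^2 * Real.exp (β/τ) := by
        have : u/τ * (Real.exp (u*a/τ) * (a/τ)) = (u*a)/τ^2 * Real.exp (u*a/τ) := by ring
        rw [this]
        have hua0 : 0 ≤ u * a := by positivity
        have : (u*a)/τ^2 * Real.exp (u*a/τ) ≤ β/τ^2 * Real.exp (β/τ) := by
          apply mul_le_mul (by gcongr) hE (le_of_lt hepos) (div_nonneg (le_trans ha0 haβ) (by positivity))
        exact this
      calc 1/τ * Real.exp (u*a/τ) + u/τ * (Real.exp (u*a/τ) * (a/τ))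
          ≤ 1/τ * Real.exp (β/τ) + β/τ^2 * Real.exp (β/τ) := by linarith
        _ = 1/τ*(1+β/τ)*Real.exp (β/τ) := by ring
    have := (convex_Icc (0:ℝ) 1).norm_image_sub_le_of_norm_hasDerivWithin_le hder hbound hw hw'
    simpa [Real.norm_eq_abs] using this
  -- Step B : outer MVT in the coordinate variable
  have hderφ : ∀ s ∈ Set.Icc lo hi,
      HasDerivWithinAt (fun s => Real.exp (w*(Ii - s)/τ) - Real.exp (w'*(Ii - s)/τ))
        ((w'/τ * Real.exp (w'*(Ii - s)/τ)) - (w/τ * Real.exp (w*(Ii - s)/τ))) (Set.Icc lo hi) s := by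
    intro s _
    have d1 : HasDerivAt (fun s : ℝ => w*(Ii - s)/τ) (-(w/τ)) s := by
      have := (((hasDerivAt_id s).const_sub Ii).const_mul w).div_const τ
      simpa using this.congr_deriv (by ring)
    have d2 : HasDerivAt (fun s : ℝ => w'*(Ii - s)/τ) (-(w'/τ)) s := by
      have := (((hasDerivAt_id s).const_sub Ii).const_mul w').div_const τ
      simpa using this.congr_deriv (by ring)
    have := d1.exp.sub d2.exp
    have heq : Real.exp (w*(Ii - s)/τ) * (-(w/τ)) - Real.exp (w'*(Ii - s)/τ) * (-(w'/τ))
        = (w'/τ * Real.exp (w'*(Ii - s)/τ)) - (w/τ * Real.exp (w*(Ii - s)/τ)) := by ring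
    rw [heq] at this
    exact this.hasDerivWithinAt
  have hboundφ : ∀ s ∈ Set.Icc lo hi,
      ‖(w'/τ * Real.exp (w'*(Ii - s)/τ)) - (w/τ * Real.exp (w*(Ii - s)/τ))‖ ≤ K * |w - w'| := by
    intro s hs
    have := stepA s hs
    rw [Real.norm_eq_abs]
    calc |(w'/τ * Real.exp (w'*(Ii - s)/τ)) - (w/τ * Real.exp (w*(Ii - s)/τ))|
        ≤ K * |w' - w| := this
      _ = K * |w - w'| := by rw [abs_sub_comm]
  have := (convex_Icc lo hi).norm_image_sub_le_of_norm_hasDerivWithin_le hderφ hboundφ hx hy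
  simpa [Real.norm_eq_abs, mul_assoc] using this

lemma convexOn_sum' {E : Type*} [NormedAddCommGroup E] [NormedSpace ℝ E] {t : Set E}
    (ht : Convex ℝ t) {ι : Type*} (s : Finset ι) (g : ι → E → ℝ)
    (h : ∀ i ∈ s, ConvexOn ℝ t (g i)) : ConvexOn ℝ t (fun x => ∑ i ∈ s, g i x) := by
  classical
  induction s using Finset.induction with
  | empty => simpa using convexOn_const 0 ht
  | @insert a s ha ih =>
    have h1 : ConvexOn ℝ t (g a) := h a (Finset.mem_insert_self a s)
    have h2 : ConvexOn ℝ t (fun x => ∑ i ∈ s, g i x) :=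
      ih (fun i hi => h i (Finset.mem_insert_of_mem hi))
    rw [show (fun x => ∑ i ∈ insert a s, g i x) = g a + fun x => ∑ i ∈ s, g i x from by
      funext x; simp [Finset.sum_insert ha]]
    exact h1.add h2

lemma cauchy_schwarz_abs {m : ℕ} (a b : Fin m → ℝ) :
    ∑ i, |a i| * |b i| ≤ Real.sqrt (∑ i, (a i)^2) * Real.sqrt (∑ i, (b i)^2) := by
  have h1 : (∑ i, |a i| * |b i|)^2 ≤ (∑ i, |a i|^2) * (∑ i, |b i|^2) :=
    Finset.sum_mul_sq_le_sq_mul_sq Finset.univ (fun i => |a i|) (fun i => |b i|)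
  simp only [sq_abs] at h1
  have h0 : 0 ≤ ∑ i, |a i| * |b i| :=
    Finset.sum_nonneg fun i _ => mul_nonneg (abs_nonneg _) (abs_nonneg _)
  calc ∑ i, |a i| * |b i| = Real.sqrt ((∑ i, |a i| * |b i|)^2) := (Real.sqrt_sq h0).symm
    _ ≤ Real.sqrt ((∑ i, (a i)^2) * (∑ i, (b i)^2)) := Real.sqrt_le_sqrt h1
    _ = Real.sqrt (∑ i, (a i)^2) * Real.sqrt (∑ i, (b i)^2) :=
        Real.sqrt_mul (Finset.sum_nonneg fun i _ => sq_nonneg _) _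

end AuxLemmas


/-- The preference simplex with all coordinates at least δ. -/
def OmegaDelta (m : ℕ) (δ : ℝ) : Set (EuclideanSpace ℝ (Fin m)) :=
  {ω | (∑ i, ω i) = 1 ∧ ∀ i, δ ≤ ω i}

/-- α_* = min_i (I_i - max_{c ∈ C} c_i). -/
noncomputable def alphaStar (m : ℕ) (I : Fin m → ℝ)
    (C : Set (EuclideanSpace ℝ (Fin m))) : ℝ :=
  ⨅ i, (I i - sSup ((fun c : EuclideanSpace ℝ (Fin m) => c i) '' C))

/-- β_i = I_i - min_{c ∈ C} c_i. -/
noncomputable def betaB (m : ℕ) (I : Fin m → ℝ)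
    (C : Set (EuclideanSpace ℝ (Fin m))) (i : Fin m) : ℝ :=
  I i - sInf ((fun c : EuclideanSpace ℝ (Fin m) => c i) '' C)

/-- Strong-convexity constant μ = (δ/τ)² e^{δ α_*/τ}. -/
noncomputable def muConst (m : ℕ) (I : Fin m → ℝ)
    (C : Set (EuclideanSpace ℝ (Fin m))) (δ τ : ℝ) : ℝ :=
  (δ / τ) ^ 2 * Real.exp (δ * alphaStar m I C / τ)

/-- Gradient ω-Lipschitz constant U = max_i (1/τ)(1 + β_i/τ) e^{β_i/τ}. -/
noncomputable def UConst (m : ℕ) (I : Fin m → ℝ)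
    (C : Set (EuclideanSpace ℝ (Fin m))) (τ : ℝ) : ℝ :=
  ⨆ i, (1 / τ) * (1 + betaB m I C i / τ) * Real.exp (betaB m I C i / τ)

/-- Lipschitz continuity of the STCH minimizer map ω ↦ c^ω on Ω^m_δ
with explicit constant U/μ. -/
theorem stmt_8 (m : ℕ) (C : Set (EuclideanSpace ℝ (Fin m))) (hne : C.Nonempty)
    (hcomp : IsCompact C) (hconv : Convex ℝ C)
    (τ δ : ℝ) (hτ : 0 < τ) (hδ0 : 0 < δ) (hδ1 : δ < 1)
    (I : Fin m → ℝ) (hI : ∀ i, ∀ c ∈ C, c i < I i)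
    (copt : EuclideanSpace ℝ (Fin m) → EuclideanSpace ℝ (Fin m))
    (hopt : ∀ ω ∈ OmegaDelta m δ,
      copt ω ∈ C ∧ (∀ c ∈ C,
        (∑ i, Real.exp (ω i * (I i - copt ω i) / τ)) ≤ ∑ i, Real.exp (ω i * (I i - c i) / τ)) ∧
      (∀ c ∈ C, (∀ c' ∈ C,
        (∑ i, Real.exp (ω i * (I i - c i) / τ)) ≤ ∑ i, Real.exp (ω i * (I i - c' i) / τ)) →
        c = copt ω)) :
    ∀ ω ∈ OmegaDelta m δ, ∀ ω' ∈ OmegaDelta m δ,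
      ‖copt ω - copt ω'‖ ≤ (UConst m I C τ / muConst m I C δ τ) * ‖ω - ω'‖ := by
  intro ω hω ω' hω'
  obtain ⟨hω1, hωδ⟩ := hω
  obtain ⟨hω'1, hω'δ⟩ := hω'
  have hm : Nonempty (Fin m) := by
    rcases Nat.eq_zero_or_pos m with h | h
    · subst h; simp at hω1
    · exact ⟨⟨0, h⟩⟩
  set S : Fin m → ℝ := fun i => sSup ((fun c : EuclideanSpace ℝ (Fin m) => c i) '' C) with hS
  set lo : Fin m → ℝ := fun i => sInf ((fun c : EuclideanSpace ℝ (Fin m) => c i) '' C) with hlodef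
  have hproj : ∀ i, Continuous (fun c : EuclideanSpace ℝ (Fin m) => c i) := by
    intro i
    exact (EuclideanSpace.proj (𝕜 := ℝ) i).continuous
  have hcS : ∀ i, ∀ c ∈ C, c i ≤ S i := fun i c hc =>
    le_csSup ((hcomp.image (hproj i)).bddAbove) ⟨c, hc, rfl⟩
  have hloc : ∀ i, ∀ c ∈ C, lo i ≤ c i := fun i c hc =>
    csInf_le ((hcomp.image (hproj i)).bddBelow) ⟨c, hc, rfl⟩
  have hSI : ∀ i, S i < I i := by
    intro i
    obtain ⟨c0, hc0, hmax⟩ := hcomp.exists_isMaxOn hne (hproj i).continuousOn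
    have h1 : S i ≤ c0 i := csSup_le (hne.image _) (by rintro _ ⟨c, hc, rfl⟩; exact hmax hc)
    exact lt_of_le_of_lt h1 (hI i c0 hc0)
  have hα_le : ∀ i, alphaStar m I C ≤ I i - S i := fun i =>
    ciInf_le (Finite.bddBelow_range _) i
  have hαpos : 0 < alphaStar m I C := by
    obtain ⟨i0, hi0⟩ := exists_eq_ciInf_of_finite
      (f := fun i => I i - sSup ((fun c : EuclideanSpace ℝ (Fin m) => c i) '' C))
    rw [alphaStar, ← hi0]
    exact sub_pos.2 (hSI i0)
  have hβeq : ∀ i, betaB m I C i = I i - lo i := fun i => rfl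
  have hβpos : ∀ i, 0 < betaB m I C i := by
    intro i
    obtain ⟨c, hc⟩ := hne
    rw [hβeq]
    have := hloc i c hc
    have := hI i c hc
    linarith
  set μ := muConst m I C δ τ with hμdef
  set U := UConst m I C τ with hUdef
  have hμpos : 0 < μ := by rw [hμdef, muConst]; positivity
  have hUb : ∀ i, (1/τ) * (1 + betaB m I C i / τ) * Real.exp (betaB m I C i / τ) ≤ U := by
    intro i
    rw [hUdef, UConst]
    exact le_ciSup (f := fun j => (1/τ) * (1 + betaB m I C j / τ) * Real.exp (betaB m I C j / τ))
      (Finite.bddAbove_range _) i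
  have hU0 : 0 ≤ U := by
    obtain ⟨i0⟩ := hm
    refine le_trans ?_ (hUb i0)
    have := hβpos i0
    positivity
  -- coordinates of ω, ω' are in [0,1]
  have hωIcc : ∀ i, ω i ∈ Set.Icc (0:ℝ) 1 := by
    intro i
    refine ⟨le_trans hδ0.le (hωδ i), ?_⟩
    calc ω i ≤ ∑ j, ω j :=
          Finset.single_le_sum (fun j _ => le_trans hδ0.le (hωδ j)) (Finset.mem_univ i)
      _ = 1 := hω1
  have hω'Icc : ∀ i, ω' i ∈ Set.Icc (0:ℝ) 1 := by
    intro i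
    refine ⟨le_trans hδ0.le (hω'δ i), ?_⟩
    calc ω' i ≤ ∑ j, ω' j :=
          Finset.single_le_sum (fun j _ => le_trans hδ0.le (hω'δ j)) (Finset.mem_univ i)
      _ = 1 := hω'1
  -- the objective
  set f : EuclideanSpace ℝ (Fin m) → EuclideanSpace ℝ (Fin m) → ℝ :=
    fun w c => ∑ i, Real.exp (w i * (I i - c i) / τ) with hfdef
  -- strong convexity of the objective
  have hFconv : ∀ w : EuclideanSpace ℝ (Fin m), (∀ i, δ ≤ w i) →
      ConvexOn ℝ C (fun c => f w c - μ/2 * ‖c‖^2) := by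
    intro w hwδ
    have hsum_eq : (fun c : EuclideanSpace ℝ (Fin m) => f w c - μ/2 * ‖c‖^2)
        = fun c => ∑ i, (Real.exp (w i * (I i - c i) / τ) - μ/2 * (c i)^2) := by
      funext c
      have hn : ‖c‖^2 = ∑ i, (c i)^2 := by
        rw [EuclideanSpace.norm_eq, Real.sq_sqrt (by positivity)]
        simp [sq_abs]
      rw [hfdef]
      simp only
      rw [hn, Finset.mul_sum, ← Finset.sum_sub_distrib]
    rw [hsum_eq]
    apply convexOn_sum' hconv
    intro i _
    have hwi : 0 < w i := lt_of_lt_of_le hδ0 (hwδ i)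
    have hb : 0 < w i / τ := by positivity
    have hμle : μ ≤ (w i / τ)^2 * Real.exp ((w i / τ) * (I i - S i)) := by
      rw [hμdef, muConst]
      have h1 : (δ/τ)^2 ≤ (w i / τ)^2 := by gcongr; exact hwδ i
      have h2 : δ * alphaStar m I C / τ ≤ (w i / τ) * (I i - S i) := by
        rw [div_mul_eq_mul_div]
        have hmul : δ * alphaStar m I C ≤ w i * (I i - S i) :=
          mul_le_mul (hwδ i) (hα_le i) hαpos.le hwi.le
        gcongr ?_ / τ
      exact mul_le_mul h1 (Real.exp_le_exp.2 h2) (Real.exp_pos _).le (by positivity)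
    have hsc := scalar_convex (w i / τ) (I i) (S i) μ hb hμle
    refine ⟨hconv, ?_⟩
    intro x hx y hy a b ha hb' hab
    have h1 := hsc.2 (Set.mem_Iic.2 (hcS i x hx)) (Set.mem_Iic.2 (hcS i y hy)) ha hb' hab
    simp only [smul_eq_mul, div_mul_eq_mul_div] at h1 ⊢
    have happ : (a • x + b • y) i = a * x i + b * y i := by
      simp [PiLp.add_apply, PiLp.smul_apply, smul_eq_mul]
    rw [happ]
    exact h1
  -- minimizers
  set x := copt ω with hxdef
  set y := copt ω' with hydef
  obtain ⟨hxC, hxmin, -⟩ := hopt ω ⟨hω1, hωδ⟩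
  obtain ⟨hyC, hymin, -⟩ := hopt ω' ⟨hω'1, hω'δ⟩
  have gx : f ω x + μ/2 * ‖y - x‖^2 ≤ f ω y :=
    growth_at_min hconv (hFconv ω hωδ) hxC (fun c hc => hxmin c hc) hyC
  have gy : f ω' y + μ/2 * ‖x - y‖^2 ≤ f ω' x :=
    growth_at_min hconv (hFconv ω' hω'δ) hyC (fun c hc => hymin c hc) hxC
  have hnrev : ‖y - x‖ = ‖x - y‖ := norm_sub_rev y x
  have key1 : μ * ‖x - y‖^2 ≤ (f ω y - f ω' y) - (f ω x - f ω' x) := by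
    rw [hnrev] at gx
    linarith
  -- Lipschitz bound on the difference
  have hsplit : (f ω y - f ω' y) - (f ω x - f ω' x)
      = ∑ i, ((Real.exp (ω i * (I i - y i) / τ) - Real.exp (ω' i * (I i - y i) / τ))
          - (Real.exp (ω i * (I i - x i) / τ) - Real.exp (ω' i * (I i - x i) / τ))) := by
    rw [hfdef]
    simp only
    rw [← Finset.sum_sub_distrib, ← Finset.sum_sub_distrib, ← Finset.sum_sub_distrib]
  have hterm : ∀ i, ((Real.exp (ω i * (I i - y i) / τ) - Real.exp (ω' i * (I i - y i) / τ))
          - (Real.exp (ω i * (I i - x i) / τ) - Real.exp (ω' i * (I i - x i) / τ)))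
      ≤ U * (|ω i - ω' i| * |y i - x i|) := by
    intro i
    have hxI : x i ∈ Set.Icc (lo i) (S i) := ⟨hloc i x hxC, hcS i x hxC⟩
    have hyI : y i ∈ Set.Icc (lo i) (S i) := ⟨hloc i y hyC, hcS i y hyC⟩
    have hcl := coord_lip τ hτ (I i) (lo i) (S i) (hSI i).le (ω i) (ω' i)
      (hωIcc i) (hω'Icc i) hxI hyI
    have hKU : (1/τ) * (1 + (I i - lo i)/τ) * Real.exp ((I i - lo i)/τ) ≤ U := by
      rw [← hβeq]; exact hUb i
    refine le_trans (le_abs_self _) (le_trans hcl ?_)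
    rw [mul_assoc]
    exact mul_le_mul_of_nonneg_right hKU (by positivity)
  have hnormω : ‖ω - ω'‖ = Real.sqrt (∑ i, (ω i - ω' i)^2) := by
    rw [EuclideanSpace.norm_eq]
    congr 1
    apply Finset.sum_congr rfl
    intro i _
    rw [PiLp.sub_apply, Real.norm_eq_abs, sq_abs]
  have hnormxy : ‖y - x‖ = Real.sqrt (∑ i, (y i - x i)^2) := by
    rw [EuclideanSpace.norm_eq]
    congr 1
    apply Finset.sum_congr rfl
    intro i _
    rw [PiLp.sub_apply, Real.norm_eq_abs, sq_abs]
  have hcs : ∑ i, |ω i - ω' i| * |y i - x i| ≤ ‖ω - ω'‖ * ‖y - x‖ := by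
    rw [hnormω, hnormxy]
    exact cauchy_schwarz_abs (fun i => ω i - ω' i) (fun i => y i - x i)
  have key2 : (f ω y - f ω' y) - (f ω x - f ω' x) ≤ U * (‖ω - ω'‖ * ‖x - y‖) := by
    rw [hsplit]
    calc (∑ i, ((Real.exp (ω i * (I i - y i) / τ) - Real.exp (ω' i * (I i - y i) / τ))
          - (Real.exp (ω i * (I i - x i) / τ) - Real.exp (ω' i * (I i - x i) / τ))))
        ≤ ∑ i, U * (|ω i - ω' i| * |y i - x i|) := Finset.sum_le_sum (fun i _ => hterm i)
      _ = U * ∑ i, |ω i - ω' i| * |y i - x i| := by rw [Finset.mul_sum]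
      _ ≤ U * (‖ω - ω'‖ * ‖y - x‖) := mul_le_mul_of_nonneg_left hcs hU0
      _ = U * (‖ω - ω'‖ * ‖x - y‖) := by rw [hnrev]
  have final : μ * ‖x - y‖^2 ≤ U * (‖ω - ω'‖ * ‖x - y‖) := le_trans key1 key2
  rcases eq_or_lt_of_le (norm_nonneg (x - y)) with h0 | h0
  · rw [← h0]
    exact mul_nonneg (div_nonneg hU0 hμpos.le) (norm_nonneg _)
  · have h1 : μ * ‖x - y‖ ≤ U * ‖ω - ω'‖ := by
      have h2 : (μ * ‖x - y‖) * ‖x - y‖ ≤ (U * ‖ω - ω'‖) * ‖x - y‖ := by nlinarith [final]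
      exact le_of_mul_le_mul_right h2 h0
    rw [div_mul_eq_mul_div, le_div_iff₀ hμpos]
    calc ‖x - y‖ * μ = μ * ‖x - y‖ := by ring
      _ ≤ U * ‖ω - ω'‖ := h1
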